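/- Let R → S be a faithfully flat ring homomorphism of commutative rings, and M a finitely generated R-module such that S ⊗_R M is a free S-module of rank n. Then M is a projective R-module, and for every prime ideal p of R the localization M_p is free of rank n over R_p. -/

import Mathlib

open TensorProduct

section Aux

variable (R S : Type*) [CommRing R] [CommRing S] [Algebra R S]

/-- Faithfully flat modules reflect injectivity. -/
lemma aux_inj_of_lTensor_inj [Module.FaithfullyFlat R S]
    {N N' : Type*} [AddCommGroup N] [Module R N] [AddCommGroup N'] [Module R N']
    (f : N →ₗ[R] N') (h : Function.Injective (LinearMap.lTensor S f)) :
    Function.Injective f := by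
  rw [← LinearMap.ker_eq_bot]
  have hι : Function.Injective (LinearMap.lTensor S (LinearMap.ker f).subtype) :=
    Module.Flat.lTensor_preserves_injective_linearMap _ (Submodule.injective_subtype _)
  have hzero : ∀ x : S ⊗[R] (LinearMap.ker f), x = 0 := by
    intro x
    apply hι
    apply h
    rw [← LinearMap.comp_apply, ← LinearMap.lTensor_comp]
    have : f ∘ₗ (LinearMap.ker f).subtype = 0 := by
      ext ⟨y, hy⟩; exact hy
    simp [this]
  haveI : Subsingleton (S ⊗[R] (LinearMap.ker f)) :=
    ⟨fun a b => by rw [hzero a, hzero b]⟩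
  haveI : Subsingleton (LinearMap.ker f) :=
    Module.FaithfullyFlat.lTensor_reflects_triviality R S _
  exact Submodule.eq_bot_of_subsingleton

end Aux

section Aux2

variable (R S : Type*) [CommRing R] [CommRing S] [Algebra R S]

lemma aux_flat_descent [Module.FaithfullyFlat R S]
    (M : Type*) [AddCommGroup M] [Module R M] [Module.Flat R (S ⊗[R] M)] :
    Module.Flat R M := by
  rw [Module.Flat.iff_rTensor_injective']
  intro I
  apply aux_inj_of_lTensor_inj R S
  have h1 : Function.Injective (LinearMap.rTensor (S ⊗[R] M) I.subtype) :=
    Module.Flat.rTensor_preserves_injective_linearMap _ (Submodule.injective_subtype _)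
  have hcomm : (TensorProduct.leftComm R S R M).toLinearMap ∘ₗ
        LinearMap.lTensor S (LinearMap.rTensor M I.subtype)
      = LinearMap.rTensor (S ⊗[R] M) I.subtype ∘ₗ (TensorProduct.leftComm R S I M).toLinearMap := by
    apply TensorProduct.ext'
    intro s z
    induction z using TensorProduct.induction_on with
    | zero => simp
    | tmul i m => simp [TensorProduct.leftComm_tmul]
    | add x y hx hy =>
      simp only [TensorProduct.tmul_add, map_add, hx, hy]
  have : LinearMap.lTensor S (LinearMap.rTensor M I.subtype)
      = (TensorProduct.leftComm R S R M).symm.toLinearMap ∘ₗ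
        (LinearMap.rTensor (S ⊗[R] M) I.subtype ∘ₗ (TensorProduct.leftComm R S I M).toLinearMap) := by
    rw [← hcomm]; ext x; simp
  rw [this]
  simp only [LinearMap.coe_comp, LinearEquiv.coe_coe]
  exact (TensorProduct.leftComm R S R M).symm.injective.comp
    (h1.comp (TensorProduct.leftComm R S I M).injective)

end Aux2

section Aux3

variable (R S : Type*) [CommRing R] [CommRing S] [Algebra R S]

lemma aux_finite_descent [Module.FaithfullyFlat R S]
    (N : Type*) [AddCommGroup N] [Module R N] [Module.Finite S (S ⊗[R] N)] :
    Module.Finite R N := by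
  classical
  obtain ⟨T, hT⟩ : (⊤ : Submodule S (S ⊗[R] N)).FG := Module.Finite.fg_top
  choose u hu using fun x : S ⊗[R] N => TensorProduct.exists_finset x
  let X : Finset N := T.biUnion fun t => (u t).image Prod.snd
  set N' : Submodule R N := Submodule.span R (X : Set N) with hN'
  have hmem : ∀ t ∈ T, t ∈ LinearMap.range ((N'.subtype).baseChange S) := by
    intro t ht
    rw [hu t]
    refine Submodule.sum_mem _ fun i hi => ?_
    refine ⟨i.1 ⊗ₜ ⟨i.2, Submodule.subset_span ?_⟩, by simp⟩
    exact Finset.mem_biUnion.mpr ⟨t, ht, Finset.mem_image_of_mem _ hi⟩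
  have hrange : LinearMap.range ((N'.subtype).baseChange S) = ⊤ := by
    rw [← top_le_iff, ← hT, Submodule.span_le]
    intro t ht
    exact hmem t ht
  have hsurj : Function.Surjective ((N'.subtype).baseChange S) :=
    LinearMap.range_eq_top.mp hrange
  -- the quotient is killed by base change
  have hzero : ∀ z : S ⊗[R] (N ⧸ N'), z = 0 := by
    intro z
    obtain ⟨w, hw⟩ := LinearMap.lTensor_surjective S (Submodule.mkQ_surjective N') z
    obtain ⟨v, hv⟩ := hsurj w
    have : (N'.mkQ ∘ₗ N'.subtype) = 0 := by ext ⟨y, hy⟩; simpa using hy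
    rw [← hw, ← hv]
    have hbc : ((N'.subtype).baseChange S : S ⊗[R] N' → S ⊗[R] N)
        = LinearMap.lTensor S N'.subtype := LinearMap.baseChange_eq_ltensor _
    calc (LinearMap.lTensor S N'.mkQ) (((N'.subtype).baseChange S) v)
        = (LinearMap.lTensor S N'.mkQ) ((LinearMap.lTensor S N'.subtype) v) := by rw [hbc]
      _ = (LinearMap.lTensor S (N'.mkQ ∘ₗ N'.subtype)) v := by
          rw [LinearMap.lTensor_comp, LinearMap.comp_apply]
      _ = 0 := by rw [this]; simp
  haveI : Subsingleton (S ⊗[R] (N ⧸ N')) := ⟨fun a b => by rw [hzero a, hzero b]⟩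
  haveI : Subsingleton (N ⧸ N') := Module.FaithfullyFlat.lTensor_reflects_triviality R S _
  have htop : N' = ⊤ := (Submodule.Quotient.subsingleton_iff (p := N')).mp inferInstance
  exact ⟨⟨X, by rw [← hN', htop]⟩⟩

end Aux3

section Aux4

variable (R S : Type*) [CommRing R] [CommRing S] [Algebra R S]

lemma aux_fp_descent [Module.FaithfullyFlat R S]
    (M : Type*) [AddCommGroup M] [Module R M] [Module.Finite R M]
    [Module.FinitePresentation S (S ⊗[R] M)] :
    Module.FinitePresentation R M := by
  obtain ⟨k, π, hπ⟩ := Module.Finite.exists_fin' R M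
  apply Module.finitePresentation_of_surjective π hπ
  -- ker π is finitely generated: use descent of finiteness
  set K := LinearMap.ker π with hK
  -- base-changed projection
  have hπS : Function.Surjective (π.baseChange S) := by
    rw [LinearMap.baseChange_eq_ltensor]
    exact LinearMap.lTensor_surjective S hπ
  have hkerfg : (LinearMap.ker (π.baseChange S)).FG :=
    Module.FinitePresentation.fg_ker (π.baseChange S) hπS
  -- S ⊗ K is isomorphic to ker (π.baseChange S)
  have hexact : Function.Exact (LinearMap.lTensor S K.subtype) (LinearMap.lTensor S π) :=
    Module.Flat.lTensor_exact S (LinearMap.exact_subtype_ker_map π)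
  have hinj : Function.Injective (K.subtype.baseChange S) := by
    rw [LinearMap.baseChange_eq_ltensor]
    exact Module.Flat.lTensor_preserves_injective_linearMap _ (Submodule.injective_subtype _)
  have hrange : LinearMap.range (K.subtype.baseChange S) = LinearMap.ker (π.baseChange S) := by
    ext x
    constructor
    · rintro ⟨y, rfl⟩
      have : (π.baseChange S) ((K.subtype.baseChange S) y)
          = (LinearMap.lTensor S π) ((LinearMap.lTensor S K.subtype) y) := by
        rw [LinearMap.baseChange_eq_ltensor, LinearMap.baseChange_eq_ltensor]
      rw [LinearMap.mem_ker, this, ← LinearMap.comp_apply, ← LinearMap.lTensor_comp]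
      have h0 : (π ∘ₗ K.subtype) = 0 := by ext ⟨y, hy⟩; simpa using (show π y = 0 from hy)
      rw [h0]; simp
    · intro hx
      have : (LinearMap.lTensor S π) x = 0 := by
        have : (π.baseChange S) x = 0 := hx
        rwa [LinearMap.baseChange_eq_ltensor] at this
      obtain ⟨y, hy⟩ := (hexact x).mp this
      exact ⟨y, by rw [LinearMap.baseChange_eq_ltensor]; exact hy⟩
  -- now transfer finiteness
  haveI : Module.Finite S (LinearMap.ker (π.baseChange S)) :=
    Module.Finite.iff_fg.mpr hkerfg
  haveI : Module.Finite S (S ⊗[R] K) := by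
    let e : (S ⊗[R] K) ≃ₗ[S] LinearMap.ker (π.baseChange S) :=
      (LinearEquiv.ofInjective (K.subtype.baseChange S) hinj).trans
        (LinearEquiv.ofEq _ _ hrange)
    exact Module.Finite.equiv e.symm
  haveI : Module.Finite R K := aux_finite_descent R S K
  exact Submodule.fg_top _ |>.mp Module.Finite.fg_top

end Aux4

set_option synthInstance.maxHeartbeats 1000000 in
set_option maxHeartbeats 1000000 in
/-- Faithfully flat descent: if `R → S` is faithfully flat, `M` a finitely generated
`R`-module with `S ⊗[R] M` free of rank `n` over `S`, then `M` is projective and all its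
localizations at primes of `R` are free of rank `n`. -/
theorem descent_projective_of_faithfullyFlat (R S : Type*) [CommRing R] [CommRing S]
    [Algebra R S] [Module.FaithfullyFlat R S]
    (M : Type*) [AddCommGroup M] [Module R M] [Module.Finite R M]
    (n : ℕ) (b : Module.Basis (Fin n) S (S ⊗[R] M)) :
    Module.Projective R M ∧
      ∀ (p : Ideal R) (_ : p.IsPrime),
        haveI : p.IsPrime := ‹_›
        Module.Free (Localization.AtPrime p) (LocalizedModule p.primeCompl M) ∧
        Module.finrank (Localization.AtPrime p) (LocalizedModule p.primeCompl M) = n := by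
  haveI : Module.Finite S (S ⊗[R] M) := Module.Finite.of_basis b
  haveI : Module.Free S (S ⊗[R] M) := Module.Free.of_basis b
  haveI : Module.FinitePresentation S (S ⊗[R] M) := Module.finitePresentation_of_projective _ _
  haveI fp : Module.FinitePresentation R M := aux_fp_descent R S M
  haveI : Module.Flat R (S ⊗[R] M) := Module.Flat.trans R S (S ⊗[R] M)
  haveI : Module.Flat R M := aux_flat_descent R S M
  constructor
  · exact Module.freeLocus_eq_univ_iff.mp Module.freeLocus_eq_univ
  · intro p hp
    haveI := hp
    set Rp := Localization.AtPrime p with hRp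
    set Mp := LocalizedModule p.primeCompl M with hMp
    haveI : Module.FinitePresentation Rp Mp := inferInstance
    haveI : Module.Flat Rp Mp := inferInstance
    haveI hfree : Module.Free Rp Mp := Module.free_of_flat_of_isLocalRing
    refine ⟨hfree, ?_⟩
    set m := Module.finrank Rp Mp with hm
    let c : Module.Basis (Fin m) Rp Mp := Module.finBasis Rp Mp
    let A := Rp ⊗[R] S
    letI : Algebra S A := Algebra.TensorProduct.rightAlgebra
    haveI : Nontrivial A := Module.FaithfullyFlat.rTensor_nontrivial R S Rp
    let e0 : Rp ⊗[R] M ≃ₗ[Rp] Mp :=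
      (IsLocalizedModule.isBaseChange p.primeCompl Rp
        (LocalizedModule.mkLinearMap p.primeCompl M)).equiv
    let e1 : (Fin m → A) ≃ₗ[A] A ⊗[Rp] Mp := (Algebra.TensorProduct.basis A c).equivFun.symm
    let e2 : A ⊗[Rp] Mp ≃ₗ[A] A ⊗[Rp] (Rp ⊗[R] M) := LinearEquiv.baseChange _ _ _ _ e0.symm
    let e3 : A ⊗[Rp] (Rp ⊗[R] M) ≃ₗ[A] A ⊗[R] M :=
      TensorProduct.AlgebraTensorModule.cancelBaseChange R Rp A A M
    let e4 : A ⊗[S] (S ⊗[R] M) ≃ₗ[A] A ⊗[R] M :=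
      TensorProduct.AlgebraTensorModule.cancelBaseChange R S A A M
    let e5 : A ⊗[S] (S ⊗[R] M) ≃ₗ[A] (Fin n → A) := (Algebra.TensorProduct.basis A b).equivFun
    have := card_eq_of_linearEquiv A (e1.trans (e2.trans (e3.trans (e4.symm.trans e5))))
    simpa using this
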